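/- For all 1 ≤ r, s, r', s' ≤ p, all 1 ≤ a, b ≤ d', and all integers k, l ≥ 0, the commutator in End_ℂ(P) satisfies ⁅F_a(r,s;k), F_b(r',s';l)⁆ = δ_{a,b}·( δ_{s,r'}·F_a(r,s';k+l) − δ_{r,s'}·F_a(r',s;k+l) ). (This is the even–even y-part of Proposition 4.2 of the paper: the operators F_a(r,s;k), images of E^r_s ⊗ t̄_{w_a}^k, realize the Takiff algebra relations of ⊕_{a=1}^{d'} gl_{p+q+m+n}[t_{w_a}]/t_{w_a}^{ξ_a} on the Fock space, restricted to the bosonic generators E^r_s with 1 ≤ r,s ≤ p.) -/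

import Mathlib

open MvPolynomial

/-- Multiplication by the variable `v`, as a `ℂ`-linear endomorphism of the
polynomial ring. -/
noncomputable def mulOp {σ : Type*} (v : σ) :
    Module.End ℂ (MvPolynomial σ ℂ) :=
  LinearMap.mulLeft ℂ (X v)

/-- The partial derivative with respect to the variable `v`, as a `ℂ`-linear endomorphism
of the polynomial ring. -/
noncomputable def derOp {σ : Type*} (v : σ) :
    Module.End ℂ (MvPolynomial σ ℂ) :=
  (pderiv v).toLinearMap

/-- The variable `y^α_r` of the Fock space `MvPolynomial (Fin d × (Fin p ⊕ Fin m)) ℂ`,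
with superscript index `α` (0-based, a natural number) and subscript `r : Fin p`. -/
def yvar (d p m : ℕ) (α : ℕ) (h : α < d) (r : Fin p) : Fin d × (Fin p ⊕ Fin m) :=
  (⟨α, h⟩, Sum.inl r)

/-- The variable `x^α_i`, with superscript index `α` (0-based) and subscript `i : Fin m`. -/
def xvar (d p m : ℕ) (α : ℕ) (h : α < d) (i : Fin m) : Fin d × (Fin p ⊕ Fin m) :=
  (⟨α, h⟩, Sum.inr i)

/-- `F_a(r,s;k) = -Σ_{α=D+1}^{D+ξ-k} ∂_{y^{α+k}_r} ∘ y^α_s`, where `D = d_a`, `ξ = ξ_a`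
(the superscripts are written 0-based, so `α` runs over `D, D+1, …, D+ξ-k-1`). -/
noncomputable def Fop (d p m : ℕ) (D ξ : ℕ) (r s : Fin p) (k : ℕ) :
    Module.End ℂ (MvPolynomial (Fin d × (Fin p ⊕ Fin m)) ℂ) :=
  - ∑ α ∈ Finset.range (ξ - k),
      if h : D + α + k < d then
        derOp (yvar d p m (D + α + k) h r) * mulOp (yvar d p m (D + α) (by omega) s)
      else 0

/-- `H_a(r,j;k) = Σ_{α=D+1}^{D+ξ-k} ∂_{y^{α+k}_r} ∘ ∂_{x^α_j}`, where `D = d_a`,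
`ξ = ξ_a`. -/
noncomputable def Hop (d p m : ℕ) (D ξ : ℕ) (r : Fin p) (j : Fin m) (k : ℕ) :
    Module.End ℂ (MvPolynomial (Fin d × (Fin p ⊕ Fin m)) ℂ) :=
  ∑ α ∈ Finset.range (ξ - k),
      if h : D + α + k < d then
        derOp (yvar d p m (D + α + k) h r) * derOp (xvar d p m (D + α) (by omega) j)
      else 0

/-- `K_a(i,s;k) = -Σ_{α=D+1}^{D+ξ-k} x^{α+k}_i ∘ y^α_s`, where `D = d_a`, `ξ = ξ_a`. -/
noncomputable def Kop (d p m : ℕ) (D ξ : ℕ) (i : Fin m) (s : Fin p) (k : ℕ) :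
    Module.End ℂ (MvPolynomial (Fin d × (Fin p ⊕ Fin m)) ℂ) :=
  - ∑ α ∈ Finset.range (ξ - k),
      if h : D + α + k < d then
        mulOp (xvar d p m (D + α + k) h i) * mulOp (yvar d p m (D + α) (by omega) s)
      else 0

/-- `G_a(i,j;k) = Σ_{α=D+1}^{D+ξ-k} x^{α+k}_i ∘ ∂_{x^α_j}`, where `D = d_a`, `ξ = ξ_a`. -/
noncomputable def Gop (d p m : ℕ) (D ξ : ℕ) (i j : Fin m) (k : ℕ) :
    Module.End ℂ (MvPolynomial (Fin d × (Fin p ⊕ Fin m)) ℂ) :=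
  ∑ α ∈ Finset.range (ξ - k),
      if h : D + α + k < d then
        mulOp (xvar d p m (D + α + k) h i) * derOp (xvar d p m (D + α) (by omega) j)
      else 0


set_option linter.unusedSectionVars false

lemma pderiv_comm' {R : Type*} [CommSemiring R] {σ : Type*} (i j : σ) (f : MvPolynomial σ R) :
    pderiv i (pderiv j f) = pderiv j (pderiv i f) := by
  classical
  induction f using MvPolynomial.induction_on' with
  | monomial s a =>
    simp only [pderiv_monomial]
    rcases eq_or_ne i j with h | h
    · subst h; rfl
    · congr 1
      · rw [tsub_tsub, tsub_tsub, add_comm]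
      · rw [Finsupp.tsub_apply, Finsupp.tsub_apply, Finsupp.single_eq_of_ne' h,
          Finsupp.single_eq_of_ne' (Ne.symm h)]
        simp only [Nat.sub_zero]
        ring
  | add f g hf hg => simp [map_add, hf, hg]

lemma pd_mul {σ : Type*} [DecidableEq σ] (u v : σ) (f : MvPolynomial σ ℂ) :
    pderiv u (X v * f) = X v * pderiv u f + (if u = v then f else 0) := by
  rw [pderiv_mul]
  rcases eq_or_ne u v with h | h
  · subst h; simp [pderiv_X_self, add_comm]
  · simp [pderiv_X_of_ne (Ne.symm h), h]

lemma derOp_mulOp {σ : Type*} [DecidableEq σ] (u v : σ) :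
    derOp u * mulOp v = mulOp v * derOp u
      + (if u = v then (1 : Module.End ℂ (MvPolynomial σ ℂ)) else 0) := by
  apply LinearMap.ext; intro f
  simp only [LinearMap.add_apply, Module.End.mul_apply, derOp, mulOp, LinearMap.mulLeft_apply,
    Derivation.coeFn_coe]
  rw [pd_mul]
  congr 1
  split_ifs <;> simp

lemma derOp_comm {σ : Type*} (u v : σ) :
    derOp (σ := σ) u * derOp v = derOp v * derOp u := by
  apply LinearMap.ext; intro f
  simp only [Module.End.mul_apply, derOp, Derivation.coeFn_coe]
  exact pderiv_comm' u v f

lemma mulOp_comm {σ : Type*} (u v : σ) :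
    mulOp (σ := σ) u * mulOp v = mulOp v * mulOp u := by
  apply LinearMap.ext; intro f
  simp only [Module.End.mul_apply, mulOp, LinearMap.mulLeft_apply]
  ring

lemma comm4 {A : Type*} [Ring A] (Du Mv Du' Mv' e1 e2 : A)
    (h1 : Du' * Mv = Mv * Du' + e1) (h2 : Du * Mv' = Mv' * Du + e2)
    (hdd : Du * Du' = Du' * Du) (hmm : Mv * Mv' = Mv' * Mv)
    (he1 : ∀ x, e1 * x = x * e1) (he2 : ∀ x, e2 * x = x * e2) :
    (Du * Mv) * (Du' * Mv') - (Du' * Mv') * (Du * Mv)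
      = e2 * (Du' * Mv) - e1 * (Du * Mv') := by
  have k1 : Mv * Du' = Du' * Mv - e1 := by rw [h1]; noncomm_ring
  have k2 : Mv' * Du = Du * Mv' - e2 := by rw [h2]; noncomm_ring
  calc (Du * Mv) * (Du' * Mv') - (Du' * Mv') * (Du * Mv)
      = Du * (Mv * Du') * Mv' - Du' * (Mv' * Du) * Mv := by noncomm_ring
    _ = Du * (Du' * Mv - e1) * Mv' - Du' * (Du * Mv' - e2) * Mv := by rw [k1, k2]
    _ = (Du * Du') * (Mv * Mv') - (Du' * Du) * (Mv' * Mv)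
          - (Du * e1 * Mv' - Du' * e2 * Mv) := by noncomm_ring
    _ = e2 * (Du' * Mv) - e1 * (Du * Mv') := by
          rw [hdd, hmm, ← he1 Du, ← he2 Du']; noncomm_ring

/-- Total (dite-free-to-use) version of `derOp ∘ yvar`. -/
noncomputable def DrOp (d p m : ℕ) (n : ℕ) (r : Fin p) :
    Module.End ℂ (MvPolynomial (Fin d × (Fin p ⊕ Fin m)) ℂ) :=
  if h : n < d then derOp (yvar d p m n h r) else 0

/-- Total version of `mulOp ∘ yvar`. -/
noncomputable def MlOp (d p m : ℕ) (n : ℕ) (s : Fin p) :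
    Module.End ℂ (MvPolynomial (Fin d × (Fin p ⊕ Fin m)) ℂ) :=
  if h : n < d then mulOp (yvar d p m n h s) else 0

lemma yvar_eq_iff (d p m : ℕ) {n n' : ℕ} (h : n < d) (h' : n' < d) (r s : Fin p) :
    yvar d p m n h r = yvar d p m n' h' s ↔ (n = n' ∧ r = s) := by
  simp [yvar, Prod.ext_iff, Fin.ext_iff]

lemma DrOp_MlOp (d p m : ℕ) {n n' : ℕ} (hn : n < d) (hn' : n' < d) (r s : Fin p) :
    DrOp d p m n r * MlOp d p m n' s
      = MlOp d p m n' s * DrOp d p m n r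
        + (if n = n' ∧ r = s then (1 : Module.End ℂ (MvPolynomial (Fin d × (Fin p ⊕ Fin m)) ℂ))
           else 0) := by
  rw [DrOp, MlOp, dif_pos hn, dif_pos hn', derOp_mulOp]
  congr 1
  exact if_congr (yvar_eq_iff d p m hn hn' r s) rfl rfl

lemma DrOp_comm (d p m : ℕ) (n n' : ℕ) (r r' : Fin p) :
    DrOp d p m n r * DrOp d p m n' r' = DrOp d p m n' r' * DrOp d p m n r := by
  rw [DrOp, DrOp]
  split_ifs <;> simp [derOp_comm]

lemma MlOp_comm (d p m : ℕ) (n n' : ℕ) (s s' : Fin p) :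
    MlOp d p m n s * MlOp d p m n' s' = MlOp d p m n' s' * MlOp d p m n s := by
  rw [MlOp, MlOp]
  split_ifs <;> simp [mulOp_comm]

lemma boole_central {A : Type*} [Ring A] (P : Prop) [Decidable P] (x : A) :
    (if P then (1 : A) else 0) * x = x * (if P then (1 : A) else 0) := by
  split_ifs <;> simp

lemma term_comm (d p m : ℕ) {n1 n2 n3 n4 : ℕ} (h1 : n1 < d) (h2 : n2 < d) (h3 : n3 < d)
    (h4 : n4 < d) (r s r' s' : Fin p) :
    (DrOp d p m n1 r * MlOp d p m n2 s) * (DrOp d p m n3 r' * MlOp d p m n4 s')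
      - (DrOp d p m n3 r' * MlOp d p m n4 s') * (DrOp d p m n1 r * MlOp d p m n2 s)
    = (if n1 = n4 ∧ r = s' then DrOp d p m n3 r' * MlOp d p m n2 s else 0)
      - (if n3 = n2 ∧ r' = s then DrOp d p m n1 r * MlOp d p m n4 s' else 0) := by
  rw [comm4 _ _ _ _ _ _ (DrOp_MlOp d p m h3 h2 r' s) (DrOp_MlOp d p m h1 h4 r s')
    (DrOp_comm d p m n1 n3 r r') (MlOp_comm d p m n2 n4 s s')
    (boole_central _) (boole_central _)]
  simp [ite_mul]

lemma expand_comm {A : Type*} [Ring A] (s t : Finset ℕ) (f g : ℕ → A) :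
    (-∑ α ∈ s, f α) * (-∑ β ∈ t, g β) - (-∑ β ∈ t, g β) * (-∑ α ∈ s, f α)
      = ∑ α ∈ s, ∑ β ∈ t, (f α * g β - g β * f α) := by
  rw [neg_mul_neg, neg_mul_neg, Finset.sum_mul_sum, Finset.sum_mul_sum,
    Finset.sum_comm (s := t) (t := s), ← Finset.sum_sub_distrib]
  exact Finset.sum_congr rfl fun α _ => (Finset.sum_sub_distrib _ _).symm

lemma key_sum {M : Type*} [AddCommMonoid M] (n k l : ℕ) (f : ℕ → ℕ → M) :
    ∑ α ∈ Finset.range (n - k), ∑ β ∈ Finset.range (n - l),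
      (if β = α + k then f α β else 0)
    = ∑ α ∈ Finset.range (n - (k + l)), f α (α + k) := by
  have h1 : ∀ α ∈ Finset.range (n - k),
      (∑ β ∈ Finset.range (n - l), (if β = α + k then f α β else 0))
      = if α ∈ Finset.range (n - (k + l)) then f α (α + k) else 0 := by
    intro α _
    rw [Finset.sum_ite_eq' (Finset.range (n - l)) (α + k) (f α)]
    exact if_congr (by simp only [Finset.mem_range]; omega) rfl rfl
  rw [Finset.sum_congr rfl h1, Finset.sum_ite_mem,
    Finset.inter_eq_right.2 (Finset.range_subset_range.2 (by omega))]

lemma Fop_eq (d p m Dc ξc : ℕ) (r s : Fin p) (k : ℕ) (h : Dc + ξc ≤ d) :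
    Fop d p m Dc ξc r s k
      = -∑ α ∈ Finset.range (ξc - k), DrOp d p m (Dc + α + k) r * MlOp d p m (Dc + α) s := by
  unfold Fop
  congr 1
  refine Finset.sum_congr rfl fun α hα => ?_
  simp only [Finset.mem_range] at hα
  have h1 : Dc + α + k < d := by omega
  rw [dif_pos h1, DrOp, MlOp, dif_pos h1, dif_pos (show Dc + α < d by omega)]

/-- The operators `F_a(r,s;k)` satisfy
`⁅F_a(r,s;k), F_b(r',s';l)⁆ = δ_{ab} (δ_{s r'} F_a(r,s';k+l) - δ_{r s'} F_a(r',s;k+l))`,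
the Takiff algebra relations of `⊕_{a=1}^{d'} gl_{p+q+m+n}[t]/t^{ξ_a}` restricted to the
bosonic generators `E^r_s`, `1 ≤ r, s ≤ p`. -/
theorem stmt8 (p m : ℕ) (hpm : 1 ≤ p + m) (d' : ℕ) (hd' : 1 ≤ d')
    (ξ : Fin d' → ℕ) (hξ : ∀ a, 0 < ξ a) (d : ℕ) (hd : d = ∑ a, ξ a)
    (D : Fin d' → ℕ)
    (hD : ∀ a, D a = ∑ b ∈ Finset.univ.filter (fun b => b < a), ξ b)
    (a b : Fin d') (r s r' s' : Fin p) (k l : ℕ) :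
    Fop d p m (D a) (ξ a) r s k * Fop d p m (D b) (ξ b) r' s' l
      - Fop d p m (D b) (ξ b) r' s' l * Fop d p m (D a) (ξ a) r s k
    = if a = b then
        (if s = r' then Fop d p m (D a) (ξ a) r s' (k + l) else 0)
          - (if r = s' then Fop d p m (D a) (ξ a) r' s (k + l) else 0)
      else 0 := by
  classical
  have hDle : ∀ c : Fin d', D c + ξ c ≤ d := by
    intro c
    rw [hD c, hd]
    calc (∑ b ∈ Finset.univ.filter (fun b => b < c), ξ b) + ξ c
        = ∑ b ∈ insert c (Finset.univ.filter (fun b => b < c)), ξ b := by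
          rw [Finset.sum_insert (by simp)]; omega
      _ ≤ ∑ b, ξ b := Finset.sum_le_sum_of_subset (Finset.subset_univ _)
  have hmono : ∀ c e : Fin d', c < e → D c + ξ c ≤ D e := by
    intro c e hce
    rw [hD c, hD e]
    calc (∑ b ∈ Finset.univ.filter (fun b => b < c), ξ b) + ξ c
        = ∑ b ∈ insert c (Finset.univ.filter (fun b => b < c)), ξ b := by
          rw [Finset.sum_insert (by simp)]; omega
      _ ≤ ∑ b ∈ Finset.univ.filter (fun b => b < e), ξ b := by
          refine Finset.sum_le_sum_of_subset ?_
          intro x hx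
          simp only [Finset.mem_insert, Finset.mem_filter, Finset.mem_univ, true_and] at hx ⊢
          rcases hx with h | h
          · exact h ▸ hce
          · exact lt_trans h hce
  rw [Fop_eq d p m _ _ r s k (hDle a), Fop_eq d p m _ _ r' s' l (hDle b), expand_comm]
  have step : ∀ α ∈ Finset.range (ξ a - k), ∀ β ∈ Finset.range (ξ b - l),
      (DrOp d p m (D a + α + k) r * MlOp d p m (D a + α) s)
          * (DrOp d p m (D b + β + l) r' * MlOp d p m (D b + β) s')
        - (DrOp d p m (D b + β + l) r' * MlOp d p m (D b + β) s')
          * (DrOp d p m (D a + α + k) r * MlOp d p m (D a + α) s)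
      = (if D a + α + k = D b + β ∧ r = s'
            then DrOp d p m (D b + β + l) r' * MlOp d p m (D a + α) s else 0)
        - (if D b + β + l = D a + α ∧ r' = s
            then DrOp d p m (D a + α + k) r * MlOp d p m (D b + β) s' else 0) := by
    intro α hα β hβ
    simp only [Finset.mem_range] at hα hβ
    have ha := hDle a; have hb := hDle b
    exact term_comm d p m (by omega) (by omega) (by omega) (by omega) r s r' s'
  rw [Finset.sum_congr rfl fun α hα => Finset.sum_congr rfl fun β hβ => step α hα β hβ]
  by_cases hab : a = b
  · subst hab
    rw [if_pos rfl]
    rw [Finset.sum_congr rfl fun α _ => Finset.sum_sub_distrib _ _, Finset.sum_sub_distrib]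
    have hS1 : (∑ α ∈ Finset.range (ξ a - k), ∑ β ∈ Finset.range (ξ a - l),
          (if D a + α + k = D a + β ∧ r = s'
            then DrOp d p m (D a + β + l) r' * MlOp d p m (D a + α) s else 0))
        = -(if r = s' then Fop d p m (D a) (ξ a) r' s (k + l) else 0) := by
      by_cases hrs : r = s'
      · have e : ∀ α β : ℕ, (if D a + α + k = D a + β ∧ r = s'
              then DrOp d p m (D a + β + l) r' * MlOp d p m (D a + α) s else 0)
            = (if β = α + k
              then DrOp d p m (D a + β + l) r' * MlOp d p m (D a + α) s else 0) :=
          fun α β => if_congr ⟨fun h => by omega, fun h => ⟨by omega, hrs⟩⟩ rfl rfl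
        simp only [e]
        rw [key_sum (ξ a) k l (fun α β => DrOp d p m (D a + β + l) r' * MlOp d p m (D a + α) s),
          if_pos hrs, Fop_eq d p m (D a) (ξ a) r' s (k + l) (hDle a), neg_neg]
        refine Finset.sum_congr rfl fun α _ => ?_
        rw [show D a + (α + k) + l = D a + α + (k + l) from by omega]
      · simp only [hrs, and_false, if_false, Finset.sum_const_zero, neg_zero]
    have hS2 : (∑ α ∈ Finset.range (ξ a - k), ∑ β ∈ Finset.range (ξ a - l),
          (if D a + β + l = D a + α ∧ r' = s
            then DrOp d p m (D a + α + k) r * MlOp d p m (D a + β) s' else 0))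
        = -(if r' = s then Fop d p m (D a) (ξ a) r s' (k + l) else 0) := by
      by_cases hrs : r' = s
      · rw [Finset.sum_comm]
        have e : ∀ β α : ℕ, (if D a + β + l = D a + α ∧ r' = s
              then DrOp d p m (D a + α + k) r * MlOp d p m (D a + β) s' else 0)
            = (if α = β + l
              then DrOp d p m (D a + α + k) r * MlOp d p m (D a + β) s' else 0) :=
          fun β α => if_congr ⟨fun h => by omega, fun h => ⟨by omega, hrs⟩⟩ rfl rfl
        simp only [e]
        rw [key_sum (ξ a) l k (fun β α => DrOp d p m (D a + α + k) r * MlOp d p m (D a + β) s'),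
          if_pos hrs, Fop_eq d p m (D a) (ξ a) r s' (k + l) (hDle a), neg_neg,
          show l + k = k + l from by omega]
        refine Finset.sum_congr rfl fun β _ => ?_
        rw [show D a + (β + l) + k = D a + β + (k + l) from by omega]
      · simp only [hrs, and_false, if_false, Finset.sum_const_zero, neg_zero]
    rw [hS1, hS2,
      show (if s = r' then Fop d p m (D a) (ξ a) r s' (k + l) else 0)
          = (if r' = s then Fop d p m (D a) (ξ a) r s' (k + l) else 0) from
        if_congr eq_comm rfl rfl]
    abel
  · rw [if_neg hab]
    refine Finset.sum_eq_zero fun α hα => Finset.sum_eq_zero fun β hβ => ?_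
    simp only [Finset.mem_range] at hα hβ
    rcases lt_or_gt_of_ne hab with h | h
    · have := hmono a b h
      rw [if_neg (fun hc => by omega), if_neg (fun hc => by omega), sub_zero]
    · have := hmono b a h
      rw [if_neg (fun hc => by omega), if_neg (fun hc => by omega), sub_zero]
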